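/- Let S and A be measurable spaces, μ₀ a probability measure on S, κ a Markov kernel from S × A to S (the transition kernel), and π, π' Markov kernels from S to A (two policies) such that for every s ∈ S the total variation distance between π(s) and π'(s) is at most ε ≥ 0. Define the state–action distributions p₀ = μ₀ ⊗ π and p_{t+1} = (p_t.bind κ) ⊗ π for the first policy, and q₀ = μ₀ ⊗ π', q_{t+1} = (q_t.bind κ) ⊗ π' for the second. For γ ∈ [0,1) define the occupation measures ρ = ∑_{t=0}^∞ ((1−γ)γ^t) • p_t and ρ' = ∑_{t=0}^∞ ((1−γ)γ^t) • q_t on S × A. Then the total variation distance between ρ and ρ' satisfies ‖ρ − ρ'‖_TV ≤ ε / (1 − γ). -/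

import Mathlib

open MeasureTheory ProbabilityTheory
open scoped ENNReal NNReal

/-- The total variation distance between two finite measures: the total
variation norm of the signed measure `μ - ν`. -/
noncomputable def tvDist {X : Type*} [MeasurableSpace X]
    (μ ν : Measure X) [IsFiniteMeasure μ] [IsFiniteMeasure ν] : ℝ :=
  ((μ.toSignedMeasure - ν.toSignedMeasure).totalVariation Set.univ).toReal

section Aux

variable {X : Type*} [MeasurableSpace X]

/-- Structure of the total variation distance between two probability measures. -/
lemma tvDist_struct (μ ν : Measure X) [IsProbabilityMeasure μ] [IsProbabilityMeasure ν] :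
    ∃ i : Set X, MeasurableSet i ∧
      tvDist μ ν = 2 * ((μ i).toReal - (ν i).toReal) ∧
      ∀ B : Set X, MeasurableSet B →
        (μ B).toReal - (ν B).toReal ≤ (μ i).toReal - (ν i).toReal := by
  set s : SignedMeasure X := μ.toSignedMeasure - ν.toSignedMeasure with hsdef
  obtain ⟨i, hi₁, hi₂, hi₃, hpos, hneg⟩ := s.toJordanDecomposition_spec
  have sapp : ∀ B : Set X, MeasurableSet B → s B = (μ B).toReal - (ν B).toReal := by
    intro B hB
    rw [hsdef, Measure.toSignedMeasure_sub_apply hB]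
    rfl
  -- s B ≤ s i for every measurable B
  have hle : ∀ B : Set X, MeasurableSet B → s B ≤ s i := by
    intro B hB
    have hsplitB : s B = s (B ∩ i) + s (B \ i) := by
      rw [← VectorMeasure.of_union (Set.disjoint_of_subset_left Set.inter_subset_right
        disjoint_sdiff_self_right) (hB.inter hi₁) (hB.diff hi₁), Set.inter_union_diff]
    have hspliti : s i = s (B ∩ i) + s (i \ B) := by
      rw [← VectorMeasure.of_union (Set.disjoint_of_subset_left Set.inter_subset_left
        disjoint_sdiff_self_right) (hB.inter hi₁) (hi₁.diff hB)]
      congr 1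
      rw [Set.inter_comm, Set.inter_union_diff]
    have h1 : s (B \ i) ≤ 0 :=
      VectorMeasure.nonpos_of_restrict_le_zero s
        (VectorMeasure.restrict_le_zero_subset s hi₁.compl (by
          intro x hx; exact hx.2) hi₃)
    have h2 : 0 ≤ s (i \ B) :=
      VectorMeasure.nonneg_of_zero_le_restrict s
        (VectorMeasure.zero_le_restrict_subset s hi₁ Set.diff_subset hi₂)
    linarith [hsplitB, hspliti]
  -- total variation value
  have htv : tvDist μ ν = s i - s iᶜ := by
    rw [tvDist, SignedMeasure.totalVariation, hpos, hneg, Measure.add_apply,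
      SignedMeasure.toMeasureOfZeroLE_apply _ hi₂ hi₁ MeasurableSet.univ,
      SignedMeasure.toMeasureOfLEZero_apply _ hi₃ hi₁.compl MeasurableSet.univ]
    rw [ENNReal.toReal_add (by exact ENNReal.coe_ne_top) (by exact ENNReal.coe_ne_top)]
    simp only [ENNReal.coe_toReal, NNReal.coe_mk]
    rw [Set.inter_univ, Set.inter_univ]
    ring
  have huniv : s i + s iᶜ = 0 := by
    rw [← VectorMeasure.of_union disjoint_compl_right hi₁ hi₁.compl, Set.union_compl_self]
    rw [sapp Set.univ MeasurableSet.univ]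
    simp
  refine ⟨i, hi₁, ?_, ?_⟩
  · rw [htv, ← sapp i hi₁]; linarith
  · intro B hB
    rw [← sapp B hB, ← sapp i hi₁]
    exact hle B hB

lemma tvDist_nonneg (μ ν : Measure X) [IsFiniteMeasure μ] [IsFiniteMeasure ν] :
    0 ≤ tvDist μ ν := ENNReal.toReal_nonneg

/-- From a TV bound, a setwise bound. -/
lemma setwise_of_tvDist {μ ν : Measure X} [IsProbabilityMeasure μ] [IsProbabilityMeasure ν]
    {ε : ℝ} (h : tvDist μ ν ≤ ε) {B : Set X} (hB : MeasurableSet B) :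
    μ B ≤ ν B + ENNReal.ofReal (ε / 2) := by
  obtain ⟨i, hi, heq, hsup⟩ := tvDist_struct μ ν
  have h1 : (μ B).toReal - (ν B).toReal ≤ ε / 2 := by
    have := hsup B hB
    linarith [heq ▸ h]
  calc μ B = ENNReal.ofReal (μ B).toReal := (ENNReal.ofReal_toReal (measure_ne_top μ B)).symm
    _ ≤ ENNReal.ofReal ((ν B).toReal + ε / 2) := ENNReal.ofReal_le_ofReal (by linarith)
    _ = ENNReal.ofReal (ν B).toReal + ENNReal.ofReal (ε / 2) :=
        ENNReal.ofReal_add ENNReal.toReal_nonneg (by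
          have h0 : 0 ≤ tvDist μ ν := tvDist_nonneg μ ν
          linarith)
    _ = ν B + ENNReal.ofReal (ε / 2) := by rw [ENNReal.ofReal_toReal (measure_ne_top ν B)]

/-- From a setwise bound, a TV bound. -/
lemma tvDist_le_of_setwise {μ ν : Measure X} [IsProbabilityMeasure μ] [IsProbabilityMeasure ν]
    {c : ℝ} (hc : 0 ≤ c) (h : ∀ B : Set X, MeasurableSet B → μ B ≤ ν B + ENNReal.ofReal c) :
    tvDist μ ν ≤ 2 * c := by
  obtain ⟨i, hi, heq, _⟩ := tvDist_struct μ ν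
  have h1 : (μ i).toReal ≤ (ν i).toReal + c := by
    have := h i hi
    have h2 : (μ i).toReal ≤ (ν i + ENNReal.ofReal c).toReal :=
      ENNReal.toReal_mono (by finiteness) this
    rwa [ENNReal.toReal_add (measure_ne_top ν i) ENNReal.ofReal_ne_top,
      ENNReal.toReal_ofReal hc] at h2
  rw [heq]; linarith

/-- Layer-cake: a setwise bound gives a bound on integrals of `[0,1]`-valued functions. -/
lemma lintegral_le_of_setwise {μ ν : Measure X} [IsProbabilityMeasure μ] [IsProbabilityMeasure ν]
    {c : ℝ≥0∞} (h : ∀ B : Set X, MeasurableSet B → μ B ≤ ν B + c)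
    {g : X → ℝ≥0∞} (hg : Measurable g) (hg1 : ∀ x, g x ≤ 1) :
    ∫⁻ x, g x ∂μ ≤ (∫⁻ x, g x ∂ν) + c := by
  set f : X → ℝ := fun x => (g x).toReal with hf
  have hfm : Measurable f := hg.ennreal_toReal
  have hf1 : ∀ x, f x ≤ 1 := fun x => by
    simpa using ENNReal.toReal_mono (by simp) (hg1 x)
  have hofg : ∀ x, ENNReal.ofReal (f x) = g x := fun x =>
    ENNReal.ofReal_toReal (ne_top_of_le_ne_top (by simp) (hg1 x))
  have key : ∀ (m : Measure X), ∫⁻ x, g x ∂m = ∫⁻ t in Set.Ioi (0:ℝ), m {a | t ≤ f a} := by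
    intro m
    rw [← lintegral_eq_lintegral_meas_le m (Filter.Eventually.of_forall fun x =>
      ENNReal.toReal_nonneg) hfm.aemeasurable]
    exact lintegral_congr fun x => (hofg x).symm
  rw [key μ, key ν]
  have hpt : ∀ t : ℝ, μ {a | t ≤ f a} ≤ ν {a | t ≤ f a}
      + Set.indicator (Set.Ioc (0:ℝ) 1) (fun _ => c) t := by
    intro t
    rcases le_or_gt t 0 with ht | ht
    · have hset : {a | t ≤ f a} = Set.univ := by
        ext a; simp only [Set.mem_setOf_eq, Set.mem_univ, iff_true]
        exact ht.trans ENNReal.toReal_nonneg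
      rw [hset]; simp [measure_univ]
    · rcases le_or_gt t 1 with ht1 | ht1
      · rw [Set.indicator_of_mem (by exact ⟨ht, ht1⟩)]
        exact h _ (measurableSet_le measurable_const hfm)
      · have hset : {a | t ≤ f a} = ∅ := by
          ext a; simp only [Set.mem_setOf_eq, Set.mem_empty_iff_false, iff_false, not_le]
          exact lt_of_le_of_lt (hf1 a) ht1
        rw [hset]; simp
  calc ∫⁻ t in Set.Ioi (0:ℝ), μ {a | t ≤ f a}
      ≤ ∫⁻ t in Set.Ioi (0:ℝ), (ν {a | t ≤ f a}
          + Set.indicator (Set.Ioc (0:ℝ) 1) (fun _ => c) t) :=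
        lintegral_mono fun t => hpt t
    _ = (∫⁻ t in Set.Ioi (0:ℝ), ν {a | t ≤ f a})
          + ∫⁻ t in Set.Ioi (0:ℝ), Set.indicator (Set.Ioc (0:ℝ) 1) (fun _ => c) t :=
        lintegral_add_right _ (Measurable.indicator measurable_const measurableSet_Ioc)
    _ = (∫⁻ t in Set.Ioi (0:ℝ), ν {a | t ≤ f a}) + c := by
        congr 1
        rw [lintegral_indicator measurableSet_Ioc, setLIntegral_const,
          Measure.restrict_apply measurableSet_Ioc]
        have : Set.Ioc (0:ℝ) 1 ∩ Set.Ioi 0 = Set.Ioc 0 1 :=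
          Set.inter_eq_left.mpr Set.Ioc_subset_Ioi_self
        rw [this, Real.volume_Ioc]
        simp

end Aux

section Prop2

variable {S A : Type*} [MeasurableSpace S] [MeasurableSpace A]

lemma isProbabilityMeasure_bind' {Y Z : Type*} [MeasurableSpace Y] [MeasurableSpace Z]
    (p : Measure Y) [IsProbabilityMeasure p] (κ : Kernel Y Z) [IsMarkovKernel κ] :
    IsProbabilityMeasure (p.bind fun y => κ y) := by
  constructor
  rw [Measure.bind_apply MeasurableSet.univ κ.measurable.aemeasurable]
  simp

lemma compProd_close_kernels (μ : Measure S) [IsProbabilityMeasure μ]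
    (π π' : Kernel S A) [IsMarkovKernel π] [IsMarkovKernel π'] {c : ℝ≥0∞}
    (h : ∀ s (B : Set A), MeasurableSet B → π s B ≤ π' s B + c)
    {E : Set (S × A)} (hE : MeasurableSet E) :
    (μ ⊗ₘ π) E ≤ (μ ⊗ₘ π') E + c := by
  rw [Measure.compProd_apply hE, Measure.compProd_apply hE]
  calc ∫⁻ s, π s (Prod.mk s ⁻¹' E) ∂μ
      ≤ ∫⁻ s, (π' s (Prod.mk s ⁻¹' E) + c) ∂μ :=
        lintegral_mono fun s => h s _ (measurable_prodMk_left hE)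
    _ = (∫⁻ s, π' s (Prod.mk s ⁻¹' E) ∂μ) + c := by
        rw [lintegral_add_right _ measurable_const, lintegral_const, measure_univ, mul_one]

lemma compProd_close_measures (π : Kernel S A) [IsMarkovKernel π]
    {m m' : Measure S} [IsProbabilityMeasure m] [IsProbabilityMeasure m'] {c : ℝ≥0∞}
    (h : ∀ B : Set S, MeasurableSet B → m B ≤ m' B + c)
    {E : Set (S × A)} (hE : MeasurableSet E) :
    (m ⊗ₘ π) E ≤ (m' ⊗ₘ π) E + c := by
  rw [Measure.compProd_apply hE, Measure.compProd_apply hE]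
  exact lintegral_le_of_setwise h
    (Kernel.measurable_kernel_prodMk_left hE) (fun s => prob_le_one)

lemma bind_close {Y Z : Type*} [MeasurableSpace Y] [MeasurableSpace Z]
    (κ : Kernel Y Z) [IsMarkovKernel κ]
    {p q : Measure Y} [IsProbabilityMeasure p] [IsProbabilityMeasure q] {c : ℝ≥0∞}
    (h : ∀ B : Set Y, MeasurableSet B → p B ≤ q B + c)
    {B : Set Z} (hB : MeasurableSet B) :
    (p.bind fun y => κ y) B ≤ (q.bind fun y => κ y) B + c := by
  rw [Measure.bind_apply hB κ.measurable.aemeasurable, Measure.bind_apply hB κ.measurable.aemeasurable]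
  exact lintegral_le_of_setwise h (κ.measurable_coe hB) (fun y => prob_le_one)

end Prop2

/-- **Lemma 1: occupation measures of `ε`-close policies are `ε/(1-γ)`-close
in total variation.** Here `p t` (resp. `q t`) is the time-`t` state–action
distribution generated from the initial distribution `μ₀`, the transition
kernel `κ`, and the policy `π` (resp. the `ε`-close policy `π'`), and
`ρ, ρ'` are the corresponding discounted occupation measures. -/
theorem tvDist_occupation_measures_le
    {S A : Type*} [MeasurableSpace S] [MeasurableSpace A]
    (μ₀ : Measure S) [IsProbabilityMeasure μ₀]
    (κ : Kernel (S × A) S) [IsMarkovKernel κ]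
    (π π' : Kernel S A) [IsMarkovKernel π] [IsMarkovKernel π']
    (ε : ℝ) (hε : 0 ≤ ε)
    (hclose : ∀ s : S, tvDist (π s) (π' s) ≤ ε)
    (γ : ℝ) (hγ₀ : 0 ≤ γ) (hγ₁ : γ < 1)
    (p q : ℕ → Measure (S × A))
    (hp0 : p 0 = μ₀ ⊗ₘ π)
    (hpsucc : ∀ t, p (t + 1) = ((p t).bind fun sa => κ sa) ⊗ₘ π)
    (hq0 : q 0 = μ₀ ⊗ₘ π')
    (hqsucc : ∀ t, q (t + 1) = ((q t).bind fun sa => κ sa) ⊗ₘ π')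
    (ρ ρ' : Measure (S × A))
    (hρ : ρ = Measure.sum fun t => (ENNReal.ofReal ((1 - γ) * γ ^ t)) • p t)
    (hρ' : ρ' = Measure.sum fun t => (ENNReal.ofReal ((1 - γ) * γ ^ t)) • q t)
    [IsFiniteMeasure ρ] [IsFiniteMeasure ρ'] :
    tvDist ρ ρ' ≤ ε / (1 - γ) := by
  have h1γ : (0:ℝ) < 1 - γ := by linarith
  have h1γ' : (1:ℝ) - γ ≠ 0 := ne_of_gt h1γ
  -- probability instances
  have hprob : ∀ t, IsProbabilityMeasure (p t) ∧ IsProbabilityMeasure (q t) := by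
    intro t
    induction t with
    | zero => rw [hp0, hq0]; exact ⟨inferInstance, inferInstance⟩
    | succ t ih =>
      obtain ⟨h1, h2⟩ := ih
      haveI := h1; haveI := h2
      haveI := isProbabilityMeasure_bind' (p t) κ
      haveI := isProbabilityMeasure_bind' (q t) κ
      rw [hpsucc, hqsucc]
      exact ⟨inferInstance, inferInstance⟩
  -- setwise closeness of the kernels
  set c : ℝ≥0∞ := ENNReal.ofReal (ε / 2) with hc
  have hker : ∀ s (B : Set A), MeasurableSet B → π s B ≤ π' s B + c :=
    fun s B hB => setwise_of_tvDist (hclose s) hB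
  -- setwise closeness of the state-action distributions
  have hstep : ∀ t (B : Set (S × A)), MeasurableSet B →
      p t B ≤ q t B + ((t : ℝ≥0∞) + 1) * c := by
    intro t
    induction t with
    | zero =>
      intro B hB
      rw [hp0, hq0]
      simpa using compProd_close_kernels μ₀ π π' hker hB
    | succ t ih =>
      intro B hB
      obtain ⟨h1, h2⟩ := hprob t
      haveI := h1; haveI := h2
      haveI := isProbabilityMeasure_bind' (p t) κ
      haveI := isProbabilityMeasure_bind' (q t) κ
      rw [hpsucc, hqsucc]
      have hbind : ∀ B' : Set S, MeasurableSet B' →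
          ((p t).bind fun sa => κ sa) B' ≤ ((q t).bind fun sa => κ sa) B'
            + ((t : ℝ≥0∞) + 1) * c :=
        fun B' hB' => bind_close κ ih hB'
      calc (((p t).bind fun sa => κ sa) ⊗ₘ π) B
          ≤ (((q t).bind fun sa => κ sa) ⊗ₘ π) B + ((t : ℝ≥0∞) + 1) * c :=
            compProd_close_measures π hbind hB
        _ ≤ ((((q t).bind fun sa => κ sa) ⊗ₘ π') B + c) + ((t : ℝ≥0∞) + 1) * c :=
            add_le_add (compProd_close_kernels _ π π' hker hB) le_rfl
        _ = (((q t).bind fun sa => κ sa) ⊗ₘ π') B + ((t + 1 : ℕ) + 1 : ℝ≥0∞) * c := by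
            push_cast
            ring
  -- summability facts
  have hγn : ‖γ‖ < 1 := by rw [Real.norm_eq_abs, abs_of_nonneg hγ₀]; exact hγ₁
  have hgeo : HasSum (fun t : ℕ => γ ^ t) (1 - γ)⁻¹ := hasSum_geometric_of_norm_lt_one hγn
  have hmulgeo : HasSum (fun t : ℕ => (t : ℝ) * γ ^ t) (γ / (1 - γ) ^ 2) :=
    hasSum_coe_mul_geometric_of_norm_lt_one hγn
  have hw : ∀ t : ℕ, (0:ℝ) ≤ (1 - γ) * γ ^ t :=
    fun t => mul_nonneg (le_of_lt h1γ) (pow_nonneg hγ₀ t)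
  -- total mass of the occupation measures is 1
  have hsum1 : HasSum (fun t : ℕ => (1 - γ) * γ ^ t) 1 := by
    have := hgeo.mul_left (1 - γ)
    rwa [mul_inv_cancel₀ h1γ'] at this
  have hofReal1 : (∑' t : ℕ, ENNReal.ofReal ((1 - γ) * γ ^ t)) = 1 := by
    rw [← ENNReal.ofReal_tsum_of_nonneg hw hsum1.summable, hsum1.tsum_eq, ENNReal.ofReal_one]
  have hρprob : IsProbabilityMeasure ρ := by
    constructor
    rw [hρ, Measure.sum_apply _ MeasurableSet.univ]
    simp only [Measure.smul_apply, smul_eq_mul]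
    have : ∀ t : ℕ, p t Set.univ = 1 := fun t => (hprob t).1.measure_univ
    simp_rw [this, mul_one]
    exact hofReal1
  have hρ'prob : IsProbabilityMeasure ρ' := by
    constructor
    rw [hρ', Measure.sum_apply _ MeasurableSet.univ]
    simp only [Measure.smul_apply, smul_eq_mul]
    have : ∀ t : ℕ, q t Set.univ = 1 := fun t => (hprob t).2.measure_univ
    simp_rw [this, mul_one]
    exact hofReal1
  -- the weighted sum of (t+1) weights
  have hKsum : HasSum (fun t : ℕ => (1 - γ) * γ ^ t * ((t : ℝ) + 1)) ((1 - γ)⁻¹) := by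
    have h3 := (hmulgeo.add hgeo).mul_left (1 - γ)
    have hval : (1 - γ) * (γ / (1 - γ) ^ 2 + (1 - γ)⁻¹) = (1 - γ)⁻¹ := by
      field_simp
      ring_nf
      all_goals exact Or.inl trivial
    have hfun : (fun t : ℕ => (1 - γ) * ((t : ℝ) * γ ^ t + γ ^ t))
        = fun t : ℕ => (1 - γ) * γ ^ t * ((t : ℝ) + 1) := by
      funext t; ring
    rwa [hval, hfun] at h3
  have hK : (∑' t : ℕ, ENNReal.ofReal ((1 - γ) * γ ^ t) * ((t : ℝ≥0∞) + 1))
      = ENNReal.ofReal ((1 - γ)⁻¹) := by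
    have hterm : ∀ t : ℕ, ENNReal.ofReal ((1 - γ) * γ ^ t) * ((t : ℝ≥0∞) + 1)
        = ENNReal.ofReal ((1 - γ) * γ ^ t * ((t : ℝ) + 1)) := by
      intro t
      have hcast : ((t : ℝ≥0∞) + 1) = ENNReal.ofReal ((t : ℝ) + 1) := by
        rw [ENNReal.ofReal_add (Nat.cast_nonneg t) zero_le_one, ENNReal.ofReal_natCast,
          ENNReal.ofReal_one]
      rw [hcast, ← ENNReal.ofReal_mul (hw t), mul_assoc]
    simp_rw [hterm]
    rw [← ENNReal.ofReal_tsum_of_nonneg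
      (fun t => mul_nonneg (hw t) (by positivity)) hKsum.summable, hKsum.tsum_eq]
  -- setwise bound for the occupation measures
  set c₀ : ℝ := (1 - γ)⁻¹ * (ε / 2) with hc₀
  have hc₀0 : 0 ≤ c₀ := mul_nonneg (by positivity) (by linarith)
  have hsetwise : ∀ B : Set (S × A), MeasurableSet B → ρ B ≤ ρ' B + ENNReal.ofReal c₀ := by
    intro B hB
    have hρB : ρ B = ∑' t, ENNReal.ofReal ((1 - γ) * γ ^ t) * p t B := by
      rw [hρ, Measure.sum_apply _ hB]; simp [Measure.smul_apply, smul_eq_mul]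
    have hρ'B : ρ' B = ∑' t, ENNReal.ofReal ((1 - γ) * γ ^ t) * q t B := by
      rw [hρ', Measure.sum_apply _ hB]; simp [Measure.smul_apply, smul_eq_mul]
    rw [hρB, hρ'B]
    calc (∑' (t : ℕ), ENNReal.ofReal ((1 - γ) * γ ^ t) * p t B)
        ≤ ∑' (t : ℕ), ENNReal.ofReal ((1 - γ) * γ ^ t) * (q t B + ((t : ℝ≥0∞) + 1) * c) :=
          ENNReal.tsum_le_tsum fun t => mul_le_mul_right (hstep t B hB) _
      _ = ∑' (t : ℕ), (ENNReal.ofReal ((1 - γ) * γ ^ t) * q t B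
          + (ENNReal.ofReal ((1 - γ) * γ ^ t) * ((t : ℝ≥0∞) + 1)) * c) := by
          congr 1; funext t; ring
      _ = (∑' (t : ℕ), ENNReal.ofReal ((1 - γ) * γ ^ t) * q t B)
          + ∑' (t : ℕ), (ENNReal.ofReal ((1 - γ) * γ ^ t) * ((t : ℝ≥0∞) + 1)) * c :=
          ENNReal.tsum_add
      _ = (∑' (t : ℕ), ENNReal.ofReal ((1 - γ) * γ ^ t) * q t B) + ENNReal.ofReal c₀ := by
          congr 1
          rw [ENNReal.tsum_mul_right, hK, hc, ← ENNReal.ofReal_mul (by positivity)]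
  have := tvDist_le_of_setwise hc₀0 hsetwise
  have h2c₀ : 2 * c₀ = ε / (1 - γ) := by
    rw [hc₀]; field_simp
  linarith [h2c₀ ▸ this]
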